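/- Let G be a finite graph, let k = ⌊m(G)⌋ and K = ⌊2m(G)⌋. Then there exist edge-disjoint forests F_K, F_{K-1}, ..., F_{k+1} contained in G such that: (a) for each i with k+1 ≤ i ≤ K, the forest F_i has maximum degree at most ⌈i/(i - m(G))⌉, and (b) for each j with k ≤ j ≤ K, the graph B_j = ∪_{i>j} F_i is (K-j)-degenerate and the graph G \ B_j (G with the edges of B_j removed) is j-degenerate. -/

import Mathlib

open Finset
open scoped Classical

variable {V : Type*}

/-- Number of edges of the graph `G` lying inside the vertex set `S`. -/
noncomputable def edgesIn [Fintype V] (G : SimpleGraph V) (S : Finset V) : ℕ :=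
  (G.edgeFinset.filter (fun e => ∀ v ∈ e, v ∈ S)).card

/-- The maximum density `m(G) = max {e(G')/v(G') : ∅ ≠ G' ⊆ G}` of a finite graph. -/
noncomputable def maxDensity [Fintype V] [Nonempty V] (G : SimpleGraph V) : ℝ :=
  ((Finset.univ : Finset (Finset V)).filter (fun S => S.Nonempty)).sup'
    ⟨Finset.univ, by simp [Finset.univ_nonempty]⟩
    (fun S => (edgesIn G S : ℝ) / (S.card : ℝ))

/-- The maximum 2-density `m₂(G)`. -/
noncomputable def max2Density [Fintype V] (G : SimpleGraph V) : ℝ :=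
  (insert ((1 : ℝ) / 2)
    (((Finset.univ : Finset (Finset V)).filter (fun S => 3 ≤ S.card)).image
      (fun S => ((edgesIn G S : ℝ) - 1) / ((S.card : ℝ) - 2)))).sup'
    (Finset.insert_nonempty _ _) id

/-- Degree of `v` in the subgraph of `G` induced on `S`. -/
noncomputable def degIn [Fintype V] (G : SimpleGraph V) (S : Finset V) (v : V) : ℕ :=
  (S.filter (fun u => G.Adj v u)).card

/-- A graph is `d`-degenerate if every nonempty (induced) subgraph has a vertex of degree at most `d`. -/
def Degenerate [Fintype V] (d : ℕ) (G : SimpleGraph V) : Prop :=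
  ∀ S : Finset V, S.Nonempty → ∃ v ∈ S, degIn G S v ≤ d

section Aux
variable [Fintype V] [Nonempty V] (G : SimpleGraph V)

lemma edgesIn_le_density {S : Finset V} (hS : S.Nonempty) :
    (edgesIn G S : ℝ) ≤ maxDensity G * S.card := by
  have hmem : S ∈ ((Finset.univ : Finset (Finset V)).filter (fun S => S.Nonempty)) := by
    simp [hS]
  have h : (edgesIn G S : ℝ) / (S.card : ℝ) ≤ maxDensity G :=
    Finset.le_sup' (f := fun S => (edgesIn G S : ℝ) / (S.card : ℝ)) hmem
  have hcard : (0:ℝ) < S.card := by exact_mod_cast hS.card_pos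
  rw [div_le_iff₀ hcard] at h
  linarith

lemma maxDensity_nonneg : 0 ≤ maxDensity G := by
  have h := edgesIn_le_density G (S := (univ : Finset V)) Finset.univ_nonempty
  have h2 : (0:ℝ) < (univ : Finset V).card := by
    exact_mod_cast (Finset.univ_nonempty (α := V)).card_pos
  nlinarith [Nat.cast_nonneg (α := ℝ) (edgesIn G (univ : Finset V))]

lemma handshake (S : Finset V) : ∑ v ∈ S, degIn G S v = 2 * edgesIn G S := by
  classical
  set P : Finset (V × V) := (S ×ˢ S).filter (fun p => G.Adj p.1 p.2) with hP
  have h1 : ∑ v ∈ S, degIn G S v = P.card := by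
    rw [Finset.card_eq_sum_card_fiberwise (f := Prod.fst) (t := S)
      (fun p hp => by have hp' : p ∈ P := hp; simp only [hP, Finset.mem_filter, Finset.mem_product] at hp'; exact hp'.1.1)]
    apply Finset.sum_congr rfl
    intro v hv
    unfold degIn
    rw [← Finset.card_image_of_injective _ (f := fun u => (v, u)) (fun a b h => (Prod.ext_iff.mp h).2)]
    congr 1
    ext p
    simp only [hP, Finset.mem_image, Finset.mem_filter, Finset.mem_product]
    constructor
    · rintro ⟨u, ⟨hu, hadj⟩, rfl⟩; exact ⟨⟨⟨hv, hu⟩, hadj⟩, rfl⟩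
    · rintro ⟨⟨⟨-, hu⟩, hadj⟩, rfl⟩; exact ⟨p.2, ⟨hu, hadj⟩, rfl⟩
  have h2 : P.card = 2 * edgesIn G S := by
    rw [Finset.card_eq_sum_card_fiberwise (f := fun p : V × V => s(p.1, p.2))
      (t := G.edgeFinset.filter (fun e : Sym2 V => ∀ v ∈ e, v ∈ S))
      (fun p hp => by
        have hp : p ∈ P := hp
        simp only [hP, Finset.mem_filter, Finset.mem_product] at hp
        show s(p.1, p.2) ∈ G.edgeFinset.filter (fun e : Sym2 V => ∀ v ∈ e, v ∈ S)
        simp only [Finset.mem_filter, SimpleGraph.mem_edgeFinset, SimpleGraph.mem_edgeSet]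
        exact ⟨hp.2, by intro v hv; rcases Sym2.mem_iff.mp hv with rfl | rfl; exacts [hp.1.1, hp.1.2]⟩)]
    unfold edgesIn
    rw [Finset.card_eq_sum_ones (G.edgeFinset.filter _), Finset.mul_sum]
    apply Finset.sum_congr rfl
    intro e he
    simp only [Finset.mem_filter, SimpleGraph.mem_edgeFinset, SimpleGraph.mem_edgeSet] at he
    induction e with
    | _ a b =>
      have hadj : G.Adj a b := he.1
      have haS : a ∈ S := he.2 a (Sym2.mem_mk_left a b)
      have hbS : b ∈ S := he.2 b (Sym2.mem_mk_right a b)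
      have : (P.filter (fun p => s(p.1, p.2) = s(a, b))) = {(a, b), (b, a)} := by
        ext ⟨p1, p2⟩
        simp only [hP, Finset.mem_filter, Finset.mem_product, Finset.mem_insert,
          Finset.mem_singleton, Sym2.eq_iff, Prod.mk.injEq]
        constructor
        · rintro ⟨-, h⟩; tauto
        · rintro (⟨rfl, rfl⟩ | ⟨rfl, rfl⟩)
          · exact ⟨⟨⟨haS, hbS⟩, hadj⟩, Or.inl ⟨rfl, rfl⟩⟩
          · exact ⟨⟨⟨hbS, haS⟩, hadj.symm⟩, Or.inr ⟨rfl, rfl⟩⟩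
      rw [this, Finset.card_insert_of_notMem (by simp [hadj.ne]), Finset.card_singleton]
      norm_num
  rw [h1, h2]

lemma exists_min_deg [Nonempty V] {S : Finset V} (hS : S.Nonempty) :
    ∃ v ∈ S, degIn G S v ≤ ⌊2 * maxDensity G⌋₊ := by
  by_contra hc
  push_neg at hc
  set K := ⌊2 * maxDensity G⌋₊ with hK
  have hsum : (K + 1) * S.card ≤ ∑ v ∈ S, degIn G S v := by
    calc (K + 1) * S.card = ∑ _v ∈ S, (K + 1) := by rw [Finset.sum_const, smul_eq_mul, mul_comm]
    _ ≤ ∑ v ∈ S, degIn G S v := Finset.sum_le_sum (fun v hv => hc v hv)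
  rw [handshake] at hsum
  have hd := edgesIn_le_density G hS
  have hcast : ((K + 1 : ℕ) : ℝ) * S.card ≤ 2 * (edgesIn G S : ℝ) := by
    exact_mod_cast hsum
  have hcard : (0:ℝ) < S.card := by exact_mod_cast hS.card_pos
  have : ((K + 1 : ℕ) : ℝ) ≤ 2 * maxDensity G := by nlinarith
  have : K + 1 ≤ K := Nat.le_floor this
  omega

lemma exists_rank [Nonempty V] :
    ∃ idx : V → ℕ, Function.Injective idx ∧
      ∀ v, (univ.filter (fun u => G.Adj v u ∧ idx v < idx u)).card ≤ ⌊2 * maxDensity G⌋₊ := by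
  set K := ⌊2 * maxDensity G⌋₊ with hK
  have main : ∀ (n : ℕ) (S : Finset V), S.card ≤ n →
      ∃ idx : V → ℕ, Set.InjOn idx ↑S ∧
        ∀ v ∈ S, (S.filter (fun u => G.Adj v u ∧ idx v < idx u)).card ≤ K := by
    intro n
    induction n with
    | zero =>
      intro S hS
      have : S = ∅ := Finset.card_eq_zero.mp (Nat.le_zero.mp hS)
      subst this
      exact ⟨fun _ => 0, by simp, by simp⟩
    | succ n ih =>
      intro S hS
      rcases S.eq_empty_or_nonempty with rfl | hne
      · exact ⟨fun _ => 0, by simp, by simp⟩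
      obtain ⟨v, hv, hdeg⟩ := exists_min_deg G hne
      obtain ⟨idx', hinj', hbound'⟩ := ih (S.erase v)
        (by have := Finset.card_erase_of_mem hv; omega)
      refine ⟨fun u => if u = v then 0 else idx' u + 1, ?_, ?_⟩
      · intro a ha b hb hab
        by_cases hav : a = v <;> by_cases hbv : b = v
        · rw [hav, hbv]
        · simp [hav, hbv] at hab
        · simp [hav, hbv] at hab
        · simp only [if_neg hav, if_neg hbv] at hab
          refine hinj' ?_ ?_ (by omega)
          · simp only [Finset.coe_erase, Set.mem_diff, Set.mem_singleton_iff]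
            exact ⟨ha, hav⟩
          · simp only [Finset.coe_erase, Set.mem_diff, Set.mem_singleton_iff]
            exact ⟨hb, hbv⟩
      · intro w hw
        by_cases hwv : w = v
        · subst hwv
          refine le_trans (Finset.card_le_card ?_) hdeg
          intro u hu
          simp only [Finset.mem_filter] at hu ⊢
          exact ⟨hu.1, hu.2.1⟩
        · have heq : S.filter (fun u => G.Adj w u ∧ (if w = v then 0 else idx' w + 1) <
              (if u = v then 0 else idx' u + 1)) =
              (S.erase v).filter (fun u => G.Adj w u ∧ idx' w < idx' u) := by
            ext u
            simp only [Finset.mem_filter, Finset.mem_erase, if_neg hwv]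
            constructor
            · rintro ⟨huS, hadj, hlt⟩
              by_cases huv : u = v
              · rw [if_pos huv] at hlt; omega
              · rw [if_neg huv] at hlt; exact ⟨⟨huv, huS⟩, hadj, by omega⟩
            · rintro ⟨⟨huv, huS⟩, hadj, hlt⟩
              exact ⟨huS, hadj, by rw [if_neg huv]; omega⟩
          rw [heq]
          exact hbound' w (Finset.mem_erase.mpr ⟨hwv, hw⟩)
  obtain ⟨idx, hinj, hbound⟩ := main (univ : Finset V).card univ le_rfl
  refine ⟨idx, fun a b hab => hinj (by simp) (by simp) hab, fun v => ?_⟩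
  exact hbound v (Finset.mem_univ v)

lemma assign (idx : V → ℕ) (hinj : Function.Injective idx) :
    ∀ c : ℕ, c ≤ ⌊2 * maxDensity G⌋₊ - ⌊maxDensity G⌋₊ →
    ∃ f : ℕ → V → Option V,
      (∀ i v u, f i v = some u → ⌊2 * maxDensity G⌋₊ - c < i ∧ i ≤ ⌊2 * maxDensity G⌋₊) ∧
      (∀ i v u, f i v = some u → G.Adj v u ∧ idx v < idx u ∧
        i ≤ (univ.filter (fun w => G.Adj v w ∧ idx v < idx w)).card) ∧
      (∀ i v, ⌊2 * maxDensity G⌋₊ - c < i → i ≤ ⌊2 * maxDensity G⌋₊ →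
        i ≤ (univ.filter (fun w => G.Adj v w ∧ idx v < idx w)).card → (f i v).isSome) ∧
      (∀ i i' v u, f i v = some u → f i' v = some u → i = i') ∧
      (∀ i u, (univ.filter (fun v => f i v = some u)).card ≤
        ⌈(i : ℝ) / ((i : ℝ) - maxDensity G)⌉₊ - 1) := by
  set m := maxDensity G with hm
  set k := ⌊m⌋₊ with hk
  set K := ⌊2 * m⌋₊ with hK
  have hm0 : 0 ≤ m := maxDensity_nonneg G
  have hkK : k ≤ K := Nat.floor_le_floor (by linarith)
  set Nb : V → Finset V := fun v => univ.filter (fun w => G.Adj v w ∧ idx v < idx w) with hNb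
  set d : V → ℕ := fun v => (Nb v).card with hd
  intro c
  induction c with
  | zero =>
    intro _
    exact ⟨fun _ _ => none, by simp, by simp, fun i v h1 h2 _ => absurd h1 (by omega),
      by simp, by simp⟩
  | succ c ih =>
    intro hc
    obtain ⟨f, h0, h1, h2, h3, h4⟩ := ih (by omega)
    set i₀ := K - c with hi₀
    have hi₀k : k + 1 ≤ i₀ := by omega
    have hcK : c < K := by omega
    have hmi : m < (i₀ : ℝ) := by
      have h1' : m < (k : ℝ) + 1 := Nat.lt_floor_add_one m
      have h2' : ((k : ℝ)) + 1 ≤ (i₀ : ℝ) := by exact_mod_cast hi₀k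
      linarith
    have hi₀pos : 0 < i₀ := by omega
    have hi₀R : (0 : ℝ) < (i₀ : ℝ) := by exact_mod_cast hi₀pos
    set D := ⌈(i₀ : ℝ) / ((i₀ : ℝ) - m)⌉₊ with hD
    have hD1 : 1 ≤ D := Nat.one_le_ceil_iff.mpr (div_pos hi₀R (by linarith))
    have hDm : m ≤ ((D : ℝ) - 1) * ((i₀ : ℝ) - m) := by
      have hle := Nat.le_ceil ((i₀ : ℝ) / ((i₀ : ℝ) - m))
      rw [div_le_iff₀ (by linarith)] at hle
      nlinarith
    set A : Finset V := univ.filter (fun v => i₀ ≤ d v) with hA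
    set cand : V → Finset V := fun v => (Nb v).filter (fun u => ∀ i, f i v ≠ some u) with hcand
    have hcand_sub : ∀ v, cand v ⊆ Nb v := fun v => Finset.filter_subset _ _
    have hcand_card : ∀ v ∈ A, i₀ ≤ (cand v).card := by
      intro v hv
      rw [hA, Finset.mem_filter] at hv
      have hsplit := Finset.card_filter_add_card_filter_not
        (s := Nb v) (p := fun u => ∀ i, f i v ≠ some u)
      have hused : ((Nb v).filter (fun u => ¬ ∀ i, f i v ≠ some u)).card ≤ d v - i₀ := by
        set w : V → ℕ := fun u => if h : ∃ i, f i v = some u then h.choose else 0 with hw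
        have hspec : ∀ u, (∃ i, f i v = some u) → f (w u) v = some u := by
          intro u h
          rw [hw]
          simp only
          rw [dif_pos h]
          exact h.choose_spec
        have hB : ((Nb v).filter (fun u => ¬ ∀ i, f i v ≠ some u)).card ≤
            (Finset.Ioc i₀ (d v)).card := by
          apply Finset.card_le_card_of_injOn w
          · intro u hu
            rw [Finset.mem_coe, Finset.mem_filter] at hu
            have hex : ∃ i, f i v = some u := by
              have := hu.2
              push_neg at this
              exact this
            have hfw := hspec u hex
            rw [Finset.mem_coe, Finset.mem_Ioc]
            exact ⟨(h0 _ _ _ hfw).1, (h1 _ _ _ hfw).2.2⟩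
          · intro u hu u' hu' huu
            rw [Finset.mem_coe, Finset.mem_filter] at hu hu'
            have hex : ∃ i, f i v = some u := by have := hu.2; push_neg at this; exact this
            have hex' : ∃ i, f i v = some u' := by have := hu'.2; push_neg at this; exact this
            have e1 := hspec u hex
            have e2 := hspec u' hex'
            rw [huu] at e1
            rw [e1] at e2
            exact Option.some_injective _ e2
        rwa [Nat.card_Ioc] at hB
      have hcv : (cand v).card + ((Nb v).filter (fun u => ¬ ∀ i, f i v ≠ some u)).card = d v :=
        hsplit
      omega
    -- Hall's theorem application
    have hHall : ∀ s : Finset {v // v ∈ A},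
        s.card ≤ (s.biUnion (fun v => (cand ↑v) ×ˢ Finset.range (D - 1))).card := by
      intro s
      rcases s.eq_empty_or_nonempty with rfl | hs
      · simp
      set T := s.map ⟨Subtype.val, Subtype.coe_injective⟩ with hT
      have hTcard : T.card = s.card := by rw [hT]; exact Finset.card_map _
      set N := T.biUnion cand with hN
      have hbi : s.biUnion (fun v => (cand ↑v) ×ˢ Finset.range (D - 1)) =
          N ×ˢ Finset.range (D - 1) := by
        ext ⟨x, r⟩
        constructor
        · intro hx
          rw [Finset.mem_biUnion] at hx
          obtain ⟨v, hv, hx⟩ := hx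
          rw [Finset.mem_product] at hx
          rw [Finset.mem_product]
          refine ⟨?_, hx.2⟩
          rw [hN, Finset.mem_biUnion]
          exact ⟨↑v, by rw [hT]; exact Finset.mem_map.mpr ⟨v, hv, rfl⟩, hx.1⟩
        · intro hx
          rw [Finset.mem_product] at hx
          obtain ⟨hxN, hr⟩ := hx
          rw [hN, Finset.mem_biUnion] at hxN
          obtain ⟨v, hvT, hx⟩ := hxN
          rw [hT, Finset.mem_map] at hvT
          obtain ⟨w, hw, hwv⟩ := hvT
          simp only [Function.Embedding.coeFn_mk] at hwv
          refine Finset.mem_biUnion.mpr ⟨w, hw, Finset.mem_product.mpr ⟨?_, hr⟩⟩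
          rw [hwv]
          exact hx
      rw [hbi, Finset.card_product, Finset.card_range]
      -- density argument
      have hTA : ∀ v ∈ T, v ∈ A := by
        rintro v hv
        rw [hT, Finset.mem_map] at hv
        obtain ⟨w, _, hwv⟩ := hv
        simp only [Function.Embedding.coeFn_mk] at hwv
        rw [← hwv]
        exact w.2
      set S' := T ∪ N with hS'
      have hEcard : i₀ * T.card ≤ edgesIn G S' := by
        have hdisj : (T : Set V).PairwiseDisjoint
            (fun v => (cand v).image (fun u => s(v, u))) := by
          intro v hv v' hv' hvv'
          simp only [Function.onFun]
          rw [Finset.disjoint_left]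
          intro e he he'
          rw [Finset.mem_image] at he he'
          obtain ⟨u, hu, rfl⟩ := he
          obtain ⟨u', hu', heq⟩ := he'
          have h5 : idx v < idx u := ((Finset.mem_filter.mp (hcand_sub _ hu)).2).2
          have h6 : idx v' < idx u' := ((Finset.mem_filter.mp (hcand_sub _ hu')).2).2
          rw [Sym2.eq_iff] at heq
          rcases heq with ⟨rfl, rfl⟩ | ⟨h7, h8⟩
          · exact hvv' rfl
          · rw [h7, h8] at h6
            omega
        have hcardE : (T.biUnion (fun v => (cand v).image (fun u => s(v, u)))).card =
            ∑ v ∈ T, ((cand v).image (fun u => s(v, u))).card :=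
          Finset.card_biUnion (fun v hv v' hv' h => hdisj hv hv' h)
        have himg : ∀ v, ((cand v).image (fun u => s(v, u))).card = (cand v).card := by
          intro v
          apply Finset.card_image_of_injOn
          intro u hu u' hu' heq
          rw [Sym2.eq_iff] at heq
          rcases heq with ⟨-, h⟩ | ⟨h5, h6⟩
          · exact h
          · exact h6.trans h5
        have hsub : T.biUnion (fun v => (cand v).image (fun u => s(v, u))) ⊆
            G.edgeFinset.filter (fun e => ∀ x ∈ e, x ∈ S') := by
          intro e he
          rw [Finset.mem_biUnion] at he
          obtain ⟨v, hv, he⟩ := he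
          rw [Finset.mem_image] at he
          obtain ⟨u, hu, rfl⟩ := he
          have hadj : G.Adj v u := ((Finset.mem_filter.mp (hcand_sub _ hu)).2).1
          rw [Finset.mem_filter, SimpleGraph.mem_edgeFinset, SimpleGraph.mem_edgeSet]
          refine ⟨hadj, ?_⟩
          intro x hx
          rcases Sym2.mem_iff.mp hx with rfl | rfl
          · exact Finset.mem_union_left _ hv
          · exact Finset.mem_union_right _ (Finset.mem_biUnion.mpr ⟨v, hv, hu⟩)
        calc i₀ * T.card = ∑ _v ∈ T, i₀ := by rw [Finset.sum_const, smul_eq_mul, mul_comm]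
          _ ≤ ∑ v ∈ T, ((cand v).image (fun u => s(v, u))).card := by
              apply Finset.sum_le_sum
              intro v hv
              rw [himg v]
              exact hcand_card v (hTA v hv)
          _ = (T.biUnion (fun v => (cand v).image (fun u => s(v, u)))).card := hcardE.symm
          _ ≤ edgesIn G S' := Finset.card_le_card hsub
      have hTne : T.Nonempty := by rw [hT]; simpa using hs
      have hS'ne : S'.Nonempty := Finset.Nonempty.inl hTne
      have hdens := edgesIn_le_density G hS'ne
      rw [← hm] at hdens
      have hS'card : (S'.card : ℝ) ≤ (T.card : ℝ) + (N.card : ℝ) := by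
        have := Finset.card_union_le T N
        exact_mod_cast this
      have hreal : (T.card : ℝ) ≤ (N.card : ℝ) * ((D - 1 : ℕ) : ℝ) := by
        have hEc : ((i₀ : ℝ)) * (T.card : ℝ) ≤ (edgesIn G S' : ℝ) := by exact_mod_cast hEcard
        have hD1c : ((D - 1 : ℕ) : ℝ) = (D : ℝ) - 1 := by
          have : (1 : ℕ) ≤ D := hD1
          push_cast [Nat.cast_sub this]
          ring
        rw [hD1c]
        have hTc : (0:ℝ) ≤ (T.card : ℝ) := Nat.cast_nonneg _
        have hNc : (0:ℝ) ≤ (N.card : ℝ) := Nat.cast_nonneg _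
        nlinarith
      rw [← hTcard]
      exact_mod_cast hreal
    obtain ⟨g, hg_inj, hg_mem⟩ :=
      (Finset.all_card_le_biUnion_card_iff_exists_injective
        (fun (v : {v // v ∈ A}) => (cand ↑v) ×ˢ Finset.range (D - 1))).mp hHall
    set f' : ℕ → V → Option V := fun i v =>
      if i = i₀ then (if hv : v ∈ A then some (g ⟨v, hv⟩).1 else none) else f i v with hf'
    have hg_cand : ∀ (v : V) (hv : v ∈ A), (g ⟨v, hv⟩).1 ∈ cand v := by
      intro v hv
      have := hg_mem ⟨v, hv⟩
      rw [Finset.mem_product] at this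
      exact this.1
    have hg_rng : ∀ (v : V) (hv : v ∈ A), (g ⟨v, hv⟩).2 ∈ Finset.range (D - 1) := by
      intro v hv
      have := hg_mem ⟨v, hv⟩
      rw [Finset.mem_product] at this
      exact this.2
    have hf'i₀ : ∀ v u, f' i₀ v = some u → ∃ hv : v ∈ A, (g ⟨v, hv⟩).1 = u := by
      intro v u hfv
      rw [hf'] at hfv
      simp only [if_pos rfl] at hfv
      by_cases hv : v ∈ A
      · rw [dif_pos hv] at hfv
        exact ⟨hv, Option.some_injective _ hfv⟩
      · rw [dif_neg hv] at hfv
        exact absurd hfv (by simp)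
    have hf'old : ∀ i v, i ≠ i₀ → f' i v = f i v := by
      intro i v hi
      rw [hf']
      simp only [if_neg hi]
    refine ⟨f', ?_, ?_, ?_, ?_, ?_⟩
    · intro i v u hfv
      by_cases hi : i = i₀
      · subst hi; omega
      · rw [hf'old _ _ hi] at hfv
        have := h0 _ _ _ hfv
        omega
    · intro i v u hfv
      by_cases hi : i = i₀
      · subst hi
        obtain ⟨hv, rfl⟩ := hf'i₀ v u hfv
        have hcm := hcand_sub v (hg_cand v hv)
        rw [hNb] at hcm
        simp only [Finset.mem_filter] at hcm
        rw [hA, Finset.mem_filter] at hv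
        exact ⟨hcm.2.1, hcm.2.2, hv.2⟩
      · rw [hf'old _ _ hi] at hfv
        exact h1 _ _ _ hfv
    · intro i v hlo hhi hdv
      by_cases hi : i = i₀
      · subst hi
        have hvA : v ∈ A := by rw [hA, Finset.mem_filter]; exact ⟨Finset.mem_univ _, hdv⟩
        rw [hf']
        simp only [if_pos rfl, dif_pos hvA]
        rfl
      · rw [hf'old _ _ hi]
        exact h2 _ _ (by omega) hhi hdv
    · intro i i' v u hfv hfv'
      by_cases hi : i = i₀ <;> by_cases hi' : i' = i₀
      · rw [hi, hi']
      · exfalso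
        subst hi
        obtain ⟨hv, rfl⟩ := hf'i₀ v u hfv
        rw [hf'old _ _ hi'] at hfv'
        have := (Finset.mem_filter.mp (hg_cand v hv)).2
        exact this i' hfv'
      · exfalso
        subst hi'
        obtain ⟨hv, rfl⟩ := hf'i₀ v u hfv'
        rw [hf'old _ _ hi] at hfv
        have := (Finset.mem_filter.mp (hg_cand v hv)).2
        exact this i hfv
      · rw [hf'old _ _ hi] at hfv
        rw [hf'old _ _ hi'] at hfv'
        exact h3 _ _ _ _ hfv hfv'
    · intro i u
      by_cases hi : i = i₀
      · subst hi
        calc (univ.filter (fun v => f' i₀ v = some u)).card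
            ≤ ({u} ×ˢ Finset.range (D - 1)).card := by
              apply Finset.card_le_card_of_injOn
                (f := fun v => if hv : v ∈ A then g ⟨v, hv⟩ else (v, 0))
              · intro v hv
                rw [Finset.mem_coe, Finset.mem_filter] at hv
                obtain ⟨hvA, hgu⟩ := hf'i₀ v u hv.2
                simp only [dif_pos hvA]
                rw [Finset.mem_coe, Finset.mem_product, Finset.mem_singleton]
                exact ⟨hgu, hg_rng v hvA⟩
              · intro v hv v' hv' heq
                rw [Finset.mem_coe, Finset.mem_filter] at hv hv'
                obtain ⟨hvA, -⟩ := hf'i₀ v u hv.2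
                obtain ⟨hvA', -⟩ := hf'i₀ v' u hv'.2
                simp only [dif_pos hvA, dif_pos hvA'] at heq
                have := hg_inj heq
                exact congrArg Subtype.val this
          _ = D - 1 := by rw [Finset.card_product, Finset.card_singleton, Finset.card_range, one_mul]
      · have : (univ.filter (fun v => f' i v = some u)) =
            (univ.filter (fun v => f i v = some u)) := by
          apply Finset.filter_congr
          intro v _
          rw [hf'old _ _ hi]
        rw [this]
        exact h4 i u

lemma acyclic_of_rank [Fintype V] (F : SimpleGraph V) (idx : V → ℕ)
    (hinj : Function.Injective idx)
    (hdeg : ∀ v a b, F.Adj v a → F.Adj v b → idx v < idx a → idx v < idx b → a = b) :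
    F.IsAcyclic := by
  intro v p hp
  have hcomm : ∀ a b : V, (if idx a ≤ idx b then a else b) = (if idx b ≤ idx a then b else a) := by
    intro a b
    by_cases h1 : idx a ≤ idx b <;> by_cases h2 : idx b ≤ idx a <;>
      simp only [if_pos, if_neg, h1, h2, if_true, if_false]
    · exact hinj (le_antisymm h1 h2)
    · omega
  set φ : Sym2 V → V := Sym2.lift ⟨fun a b => if idx a ≤ idx b then a else b, hcomm⟩ with hφ
  set S : Finset V := p.support.toFinset with hS
  set E : Finset (Sym2 V) := p.edges.toFinset with hE
  have hlen : 3 ≤ p.length := hp.three_le_length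
  have htne : p.support.tail ≠ [] := by
    intro h
    have h1 := p.length_support
    have h2 : p.support.tail.length = 0 := by rw [h]; rfl
    rw [List.length_tail] at h2
    omega
  have hvtail : v ∈ p.support.tail := by
    have hgl := p.getLast_support
    have h2 : p.support.tail.getLast htne = p.support.getLast (by simp) :=
      List.getLast_tail _
    rw [hgl] at h2
    have h3 := List.getLast_mem htne
    rwa [h2] at h3
  have hsub : ∀ u ∈ p.support, u ∈ p.support.tail := by
    intro u hu
    rw [SimpleGraph.Walk.support_eq_cons] at hu
    rcases List.mem_cons.mp hu with rfl | h
    · exact hvtail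
    · exact h
  have hScard : S.card ≤ p.length := by
    calc S.card ≤ p.support.tail.toFinset.card := Finset.card_le_card (by
          intro u hu
          rw [hS, List.mem_toFinset] at hu
          rw [List.mem_toFinset]
          exact hsub u hu)
      _ ≤ p.support.tail.length := p.support.tail.toFinset_card_le
      _ = p.length := by
          have := p.length_support
          rw [List.length_tail]
          omega
  have hEcard : E.card = p.length := by
    rw [hE, List.toFinset_card_of_nodup hp.edges_nodup, SimpleGraph.Walk.length_edges]
  have hdecomp : ∀ e, e ∈ p.edges → ∃ x y : V, e = s(x, y) ∧ F.Adj x y ∧ idx x < idx y ∧ φ e = x := by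
    intro e
    induction e with
    | _ a b =>
      intro he
      have hadj : F.Adj a b := p.adj_of_mem_edges he
      by_cases h : idx a ≤ idx b
      · have hlt : idx a < idx b := lt_of_le_of_ne h (fun hh => hadj.ne (hinj hh))
        exact ⟨a, b, rfl, hadj, hlt, by rw [hφ, Sym2.lift_mk]; exact if_pos h⟩
      · have hlt : idx b < idx a := by omega
        exact ⟨b, a, Sym2.eq_swap, hadj.symm, hlt, by rw [hφ, Sym2.lift_mk]; exact if_neg h⟩
  have hSne : S.Nonempty := ⟨v, by simp [hS, p.start_mem_support]⟩
  obtain ⟨xm, hxm, hxmax⟩ := S.exists_max_image idx hSne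
  have hmem : ∀ e ∈ E, φ e ∈ S.erase xm := by
    intro e he
    rw [hE, List.mem_toFinset] at he
    obtain ⟨x, y, hexy, hadj, hlt, hphi⟩ := hdecomp e he
    rw [hphi]
    have he2 : s(x, y) ∈ p.edges := hexy ▸ he
    have hxS : x ∈ S := by
      rw [hS, List.mem_toFinset]
      exact p.fst_mem_support_of_mem_edges he2
    have hyS : y ∈ S := by
      rw [hS, List.mem_toFinset]
      exact p.snd_mem_support_of_mem_edges he2
    refine Finset.mem_erase.mpr ⟨?_, hxS⟩
    rintro rfl
    exact absurd (hxmax y hyS) (by omega)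
  have hinjE : Set.InjOn φ (E : Set (Sym2 V)) := by
    intro e he e' he' heq
    rw [Finset.mem_coe, hE, List.mem_toFinset] at he he'
    obtain ⟨x, y, hexy, hadj, hlt, hphi⟩ := hdecomp e he
    obtain ⟨x', y', hexy', hadj', hlt', hphi'⟩ := hdecomp e' he'
    rw [hphi, hphi'] at heq
    subst heq
    have hyy := hdeg x y y' hadj hadj' hlt hlt'
    rw [hexy, hexy', hyy]
  have hfinal : E.card ≤ (S.erase xm).card :=
    Finset.card_le_card_of_injOn φ hmem hinjE
  rw [hEcard, Finset.card_erase_of_mem hxm] at hfinal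
  omega

lemma degIn_le_of [Fintype V] (G' : SimpleGraph V) (S : Finset V) (v : V) (T : Finset V)
    (h : ∀ u ∈ S, G'.Adj v u → u ∈ T) : degIn G' S v ≤ T.card := by
  unfold degIn
  apply Finset.card_le_card
  intro u hu
  rw [Finset.mem_filter] at hu
  exact h u hu.1 hu.2

end Aux

/-- degenerate decomposition. With `k = ⌊m(G)⌋` and `K = ⌊2m(G)⌋` there are
edge-disjoint forests `F_K, …, F_{k+1}` inside `G` such that each `F_i` has maximum degree at
most `⌈i/(i - m(G))⌉`, and for each `k ≤ j ≤ K` the union `B_j = ⋃_{i > j} F_i` is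
`(K - j)`-degenerate and `G \ B_j` is `j`-degenerate. -/
theorem stmt_5 [Fintype V] [Nonempty V] (G : SimpleGraph V) :
    ∃ F : ℕ → SimpleGraph V,
      (∀ i, ⌊maxDensity G⌋₊ + 1 ≤ i → i ≤ ⌊2 * maxDensity G⌋₊ →
        F i ≤ G ∧ (F i).IsAcyclic ∧
        ∀ v, degIn (F i) Finset.univ v ≤ ⌈(i : ℝ) / ((i : ℝ) - maxDensity G)⌉₊) ∧
      (∀ i j, i ≠ j → Disjoint (F i) (F j)) ∧
      (∀ j, ⌊maxDensity G⌋₊ ≤ j → j ≤ ⌊2 * maxDensity G⌋₊ →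
        Degenerate (⌊2 * maxDensity G⌋₊ - j) (⨆ i ∈ Set.Ioc j ⌊2 * maxDensity G⌋₊, F i) ∧
        Degenerate j (G \ ⨆ i ∈ Set.Ioc j ⌊2 * maxDensity G⌋₊, F i)) := by
  classical
  obtain ⟨idx, hinj, hK⟩ := exists_rank G
  have hm0 : 0 ≤ maxDensity G := maxDensity_nonneg G
  have hkK : ⌊maxDensity G⌋₊ ≤ ⌊2 * maxDensity G⌋₊ := Nat.floor_le_floor (by linarith)
  obtain ⟨f, h0, h1, h2, h3, h4⟩ := assign G idx hinj
    (⌊2 * maxDensity G⌋₊ - ⌊maxDensity G⌋₊) le_rfl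
  set m := maxDensity G with hm
  set k := ⌊m⌋₊ with hk
  set K := ⌊2 * m⌋₊ with hKdef
  have hklt : ∀ i v u, f i v = some u → k < i ∧ i ≤ K := by
    intro i v u hf
    have := h0 i v u hf
    omega
  have h2' : ∀ i v, k < i → i ≤ K →
      i ≤ (univ.filter (fun w => G.Adj v w ∧ idx v < idx w)).card → (f i v).isSome := by
    intro i v hi hi2 hi3
    exact h2 i v (by omega) hi2 hi3
  have hmlt : ∀ i : ℕ, k + 1 ≤ i → m < (i : ℝ) := by
    intro i hi
    have ha : m < (k : ℝ) + 1 := Nat.lt_floor_add_one m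
    have hb : ((k : ℝ)) + 1 ≤ (i : ℝ) := by exact_mod_cast hi
    linarith
  set F : ℕ → SimpleGraph V := fun i =>
    { Adj := fun x y => (f i x = some y) ∨ (f i y = some x)
      symm := ⟨fun x y h => Or.symm h⟩
      loopless := ⟨fun x h => by
        rcases h with h | h <;> exact absurd (h1 _ _ _ h).2.1 (lt_irrefl _)⟩ } with hF
  have hFadj : ∀ i x y, (F i).Adj x y → (f i x = some y) ∨ (f i y = some x) := by
    intro i x y h
    exact h
  have hFadj' : ∀ i x y, (f i x = some y) → (F i).Adj x y := by
    intro i x y h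
    exact Or.inl h
  refine ⟨F, ?_, ?_, ?_⟩
  · -- forests with bounded degree
    intro i hi1 hi2
    have hDm : m < (i : ℝ) := hmlt i hi1
    have hD1 : 1 ≤ ⌈(i : ℝ) / ((i : ℝ) - m)⌉₊ := by
      refine Nat.one_le_ceil_iff.mpr (div_pos ?_ (by linarith))
      have : 0 < i := by omega
      exact_mod_cast this
    refine ⟨?_, ?_, ?_⟩
    · intro x y hxy
      rcases hFadj _ _ _ hxy with h | h
      · exact (h1 _ _ _ h).1
      · exact ((h1 _ _ _ h).1).symm
    · apply acyclic_of_rank (F i) idx hinj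
      intro w a b hadja hadjb hlta hltb
      have hfa : f i w = some a := by
        rcases hFadj _ _ _ hadja with h | h
        · exact h
        · have := (h1 _ _ _ h).2.1
          omega
      have hfb : f i w = some b := by
        rcases hFadj _ _ _ hadjb with h | h
        · exact h
        · have := (h1 _ _ _ h).2.1
          omega
      exact Option.some_injective _ (hfa.symm.trans hfb)
    · intro v
      refine le_trans (degIn_le_of (F i) univ v (insert ((f i v).getD v)
        (univ.filter (fun u => f i u = some v))) ?_) ?_
      · intro u hu hadj
        rw [Finset.mem_insert]
        rcases hFadj _ _ _ hadj with h | h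
        · left; rw [h]; rfl
        · right; rw [Finset.mem_filter]; exact ⟨Finset.mem_univ _, h⟩
      · refine le_trans (Finset.card_insert_le _ _) ?_
        have := h4 i v
        omega
  · -- pairwise disjoint
    intro i j hij
    rw [disjoint_iff]
    ext x y
    simp only [SimpleGraph.inf_adj, SimpleGraph.bot_adj, iff_false, not_and]
    intro hxy1 hxy2
    rcases hFadj _ _ _ hxy1 with ha | ha <;> rcases hFadj _ _ _ hxy2 with hb | hb
    · exact hij (h3 _ _ _ _ ha hb)
    · have l1 := (h1 _ _ _ ha).2.1
      have l2 := (h1 _ _ _ hb).2.1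
      omega
    · have l1 := (h1 _ _ _ ha).2.1
      have l2 := (h1 _ _ _ hb).2.1
      omega
    · exact hij (h3 _ _ _ _ ha hb)
  · -- degeneracy statements
    intro j hj1 hj2
    have hBadj : ∀ x y, (⨆ i ∈ Set.Ioc j K, F i).Adj x y →
        ∃ i, i ∈ Set.Ioc j K ∧ (F i).Adj x y := by
      intro x y h
      simp only [SimpleGraph.iSup_adj] at h
      obtain ⟨i, hi, h⟩ := h
      exact ⟨i, hi, h⟩
    have hBadj' : ∀ (i : ℕ) (x y : V), i ∈ Set.Ioc j K → (F i).Adj x y →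
        (⨆ i ∈ Set.Ioc j K, F i).Adj x y := by
      intro i x y hi h
      simp only [SimpleGraph.iSup_adj]
      exact ⟨i, hi, h⟩
    constructor
    · intro S hS
      obtain ⟨v, hv, hmin⟩ := S.exists_min_image idx hS
      refine ⟨v, hv, ?_⟩
      refine le_trans (degIn_le_of _ S v
        ((Finset.Ioc j K).image (fun i => (f i v).getD v)) ?_) ?_
      · intro u huS hadj
        obtain ⟨i, hiIoc, hFi⟩ := hBadj v u hadj
        have hne : u ≠ v := fun h => (h ▸ hFi).ne rfl
        have hlt : idx v < idx u := by
          rcases lt_or_eq_of_le (hmin u huS) with h | h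
          · exact h
          · exact absurd (hinj h) (Ne.symm hne)
        rcases hFadj _ _ _ hFi with h | h
        · rw [Finset.mem_image]
          exact ⟨i, by rw [Finset.mem_Ioc]; exact ⟨hiIoc.1, hiIoc.2⟩, by rw [h]; rfl⟩
        · have := (h1 _ _ _ h).2.1
          omega
      · refine le_trans Finset.card_image_le ?_
        rw [Nat.card_Ioc]
    · intro S hS
      obtain ⟨v, hv, hmin⟩ := S.exists_min_image idx hS
      refine ⟨v, hv, ?_⟩
      set Nbv := univ.filter (fun w => G.Adj v w ∧ idx v < idx w) with hNbv
      have hdK : Nbv.card ≤ K := hK v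
      set BF := Nbv.filter (fun u => (⨆ i ∈ Set.Ioc j K, F i).Adj v u) with hBF
      have hc2 : BF.card ≤ Nbv.card := Finset.card_le_card (Finset.filter_subset _ _)
      refine le_trans (degIn_le_of _ S v (Nbv \ BF) ?_) ?_
      · intro u huS hadj
        rw [SimpleGraph.sdiff_adj] at hadj
        have hne : u ≠ v := fun h => (h ▸ hadj.1).ne rfl
        have hlt : idx v < idx u := by
          rcases lt_or_eq_of_le (hmin u huS) with h | h
          · exact h
          · exact absurd (hinj h) (Ne.symm hne)
        rw [Finset.mem_sdiff]
        constructor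
        · rw [hNbv, Finset.mem_filter]
          exact ⟨Finset.mem_univ _, hadj.1, hlt⟩
        · rw [hBF, Finset.mem_filter]
          rintro ⟨-, hB⟩
          exact hadj.2 hB
      · rw [Finset.card_sdiff_of_subset (Finset.filter_subset _ _)]
        by_cases hdj : Nbv.card ≤ j
        · omega
        · push_neg at hdj
          have himg : (Finset.Ioc j Nbv.card).image (fun i => (f i v).getD v) ⊆ BF := by
            intro u hu
            rw [Finset.mem_image] at hu
            obtain ⟨i, hi, hiu⟩ := hu
            rw [Finset.mem_Ioc] at hi
            have hsome : (f i v).isSome := h2' i v (by omega) (by omega) hi.2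
            obtain ⟨u', hu'⟩ := Option.isSome_iff_exists.mp hsome
            rw [hu'] at hiu
            simp only [Option.getD_some] at hiu
            subst hiu
            have hprops := h1 _ _ _ hu'
            rw [hBF, Finset.mem_filter]
            refine ⟨?_, ?_⟩
            · rw [hNbv, Finset.mem_filter]
              exact ⟨Finset.mem_univ _, hprops.1, hprops.2.1⟩
            · exact hBadj' i v u' (Set.mem_Ioc.mpr ⟨hi.1, by omega⟩) (hFadj' _ _ _ hu')
          have hinjIoc : Set.InjOn (fun i => (f i v).getD v)
              ((Finset.Ioc j Nbv.card) : Set ℕ) := by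
            intro i hi i' hi' heq
            rw [Finset.mem_coe, Finset.mem_Ioc] at hi hi'
            have hsome : (f i v).isSome := h2' i v (by omega) (by omega) hi.2
            have hsome' : (f i' v).isSome := h2' i' v (by omega) (by omega) hi'.2
            obtain ⟨u, hu⟩ := Option.isSome_iff_exists.mp hsome
            obtain ⟨u', hu'⟩ := Option.isSome_iff_exists.mp hsome'
            simp only [hu, hu', Option.getD_some] at heq
            subst heq
            exact h3 _ _ _ _ hu hu'
          have hcard1 : Nbv.card - j ≤ BF.card := by
            calc Nbv.card - j = (Finset.Ioc j Nbv.card).card := (Nat.card_Ioc _ _).symm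
              _ = ((Finset.Ioc j Nbv.card).image (fun i => (f i v).getD v)).card :=
                  (Finset.card_image_of_injOn hinjIoc).symm
              _ ≤ BF.card := Finset.card_le_card himg
          rw [hBF] at hcard1 hc2
          omega
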